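/- In a 2-connected graph G in which the pair {a,b} is a 2-vertex-cut, let H be one of the split subgraphs with respect to {a,b} (a connected component of G minus {a,b} together with a, b and the edges to them, excluding any edge (a,b)). Then for every vertex x of H other than a and b, there exists a simple path from a to b within H passing through x. -/

import Mathlib

/-- `G` is `k`-vertex-connected: more than `k` vertices and no set of fewer than `k`
vertices disconnects it. -/
def IsKConnected {V : Type*} [Fintype V] (G : SimpleGraph V) (k : ℕ) : Prop :=
  k + 1 ≤ Fintype.card V ∧
    ∀ S : Finset V, S.card < k → (G.induce (↑S : Set V)ᶜ).Connected

open SimpleGraph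

section AuxGeneric

variable {W : Type*} {G : SimpleGraph W}

private lemma isPath_append' {u v w : W} {p : G.Walk u v} {q : G.Walk v w}
    (hp : p.IsPath) (hq : q.IsPath)
    (h : ∀ z, z ∈ p.support → z ∈ q.support → z = v) : (p.append q).IsPath := by
  rw [Walk.isPath_def, Walk.support_append, List.nodup_append]
  refine ⟨hp.support_nodup, (hq.support_nodup).tail, ?_⟩
  intro z hz1 y hz2 hzy
  subst hzy
  have hzq : z ∈ q.support := List.mem_of_mem_tail hz2
  have hzv : z = v := h z hz1 hzq
  subst hzv
  have hnd := hq.support_nodup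
  rw [q.support_eq_cons] at hnd
  exact (List.nodup_cons.mp hnd).1 hz2

private lemma mem_both_split [DecidableEq W] {u v z : W} {P : G.Walk u v}
    (hP : P.IsPath) (hz : z ∈ P.support)
    {y : W} (h1 : y ∈ (P.takeUntil z hz).support) (h2 : y ∈ (P.dropUntil z hz).support) :
    y = z := by
  by_contra hne
  have hP' := hP
  rw [← P.take_spec hz, Walk.isPath_def, Walk.support_append, List.nodup_append] at hP'
  have hy2 : y ∈ (P.dropUntil z hz).support.tail := by
    have hcons := (P.dropUntil z hz).support_eq_cons
    rw [hcons, List.mem_cons] at h2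
    rcases h2 with h2 | h2
    · exact absurd h2 hne
    · exact h2
  exact hP'.2.2 y h1 y hy2 rfl

end AuxGeneric

section MainAux

variable {V : Type*} [Fintype V] (G : SimpleGraph V)

private lemma avoid_walk (h2 : IsKConnected G 2) (w u v : V) (hu : u ≠ w) (hv : v ≠ w) :
    ∃ p : G.Walk u v, w ∉ p.support := by
  have hconn := h2.2 {w} (by simp)
  have hus : u ∈ ((↑({w} : Finset V) : Set V))ᶜ := by simp [hu]
  have hvs : v ∈ ((↑({w} : Finset V) : Set V))ᶜ := by simp [hv]
  obtain ⟨p0⟩ := hconn.preconnected ⟨u, hus⟩ ⟨v, hvs⟩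
  refine ⟨p0.map (SimpleGraph.Embedding.induce _).toHom, ?_⟩
  intro hmem0
  have hmem : w ∈ p0.support.map
      (SimpleGraph.Embedding.induce (G := G) ((↑({w} : Finset V) : Set V))ᶜ).toHom := by
    rw [← Walk.support_map]; exact hmem0
  obtain ⟨t, ht, hteq⟩ := List.mem_map.mp hmem
  have ht2 := t.2
  simp only [Finset.coe_singleton, Set.mem_compl_iff, Set.mem_singleton_iff] at ht2
  exact ht2 hteq

variable {G}

private lemma adjH {a b : V} {K : Set V} (hKa : a ∉ K) (hKb : b ∉ K)
    {u v : V} (hu : u ∈ K) (hv : v ∈ ({a, b} ∪ K : Set V)) (h : G.Adj u v) :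
    ((G.deleteEdges {s(a, b)}).induce ({a, b} ∪ K)).Adj ⟨u, Or.inr hu⟩ ⟨v, hv⟩ := by
  simp only [comap_adj, Function.Embedding.coe_subtype, deleteEdges_adj,
    Set.mem_singleton_iff]
  refine ⟨h, ?_⟩
  intro hcon
  rw [Sym2.eq_iff] at hcon
  rcases hcon with ⟨rfl, rfl⟩ | ⟨rfl, rfl⟩
  · exact hKa hu
  · exact hKb hu

private lemma trunc {a b : V} {K : Set V} (hKa : a ∉ K) (hKb : b ∉ K)
    (hKmax : ∀ x ∈ K, ∀ y, G.Adj x y → y ≠ a → y ≠ b → y ∈ K)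
    (T : Set V) (hT : T ⊆ ({a, b} ∪ K : Set V)) (haT : a ∈ T) (hbT : b ∈ T) (w : V) :
    ∀ {u y : V} (p : G.Walk u y) (hu : u ∈ K), u ∉ T → y ∈ T → w ∉ p.support →
    ∃ z : ({a, b} ∪ K : Set V), z.1 ∈ T ∧
      ∃ q : ((G.deleteEdges {s(a, b)}).induce ({a, b} ∪ K)).Walk ⟨u, Or.inr hu⟩ z,
        (∀ v ∈ q.support, v.1 = z.1 ∨ (v.1 ∈ K ∧ v.1 ∉ T)) ∧
        (∀ v ∈ q.support, v.1 ≠ w) := by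
  intro u y p
  induction p with
  | nil =>
    intro hu huT hyT _
    exact absurd hyT huT
  | @cons u m y h p ih =>
    intro hu huT hyT hw
    rw [Walk.support_cons, List.mem_cons] at hw
    push_neg at hw
    by_cases hmT : m ∈ T
    · -- stop here: z = m
      refine ⟨⟨m, hT hmT⟩, hmT,
        Walk.cons (adjH hKa hKb hu (hT hmT) h) Walk.nil, ?_, ?_⟩
      · intro v hv
        rw [Walk.support_cons, Walk.support_nil, List.mem_cons, List.mem_singleton] at hv
        rcases hv with rfl | rfl
        · exact Or.inr ⟨hu, huT⟩
        · exact Or.inl rfl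
      · intro v hv
        rw [Walk.support_cons, Walk.support_nil, List.mem_cons, List.mem_singleton] at hv
        rcases hv with rfl | rfl
        · exact fun hc => hw.1 hc.symm
        · exact fun hc => hw.2 (hc ▸ p.start_mem_support)
    · -- continue: m ∈ K
      have hma : m ≠ a := fun hc => hmT (hc ▸ haT)
      have hmb : m ≠ b := fun hc => hmT (hc ▸ hbT)
      have hmK : m ∈ K := hKmax u hu m h hma hmb
      obtain ⟨z, hzT, q, hq1, hq2⟩ := ih hmK hmT hyT (fun hc => hw.2 hc)
      refine ⟨z, hzT, Walk.cons (adjH hKa hKb hu (Or.inr hmK) h) q, ?_, ?_⟩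
      · intro v hv
        rw [Walk.support_cons, List.mem_cons] at hv
        rcases hv with rfl | hv
        · exact Or.inr ⟨hu, huT⟩
        · exact hq1 v hv
      · intro v hv
        rw [Walk.support_cons, List.mem_cons] at hv
        rcases hv with rfl | hv
        · exact fun hc => hw.1 hc.symm
        · exact hq2 v hv

private lemma main_ind [DecidableEq V] (h2 : IsKConnected G 2) (a b : V) (hab : a ≠ b)
    (K : Set V) (hKa : a ∉ K) (hKb : b ∉ K)
    (hKmax : ∀ x ∈ K, ∀ y, G.Adj x y → y ≠ a → y ≠ b → y ∈ K) :
    ∀ n : ℕ, ∀ x : V, ∀ hx : x ∈ K,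
    ∀ R : ((G.deleteEdges {s(a, b)}).induce ({a, b} ∪ K)).Walk
        ⟨x, Or.inr hx⟩ ⟨a, Or.inl (Or.inl rfl)⟩,
    R.IsPath → (∀ v ∈ R.support, v.1 ≠ b) → R.length ≤ n →
    ∃ p : ((G.deleteEdges {s(a, b)}).induce ({a, b} ∪ K)).Walk
        ⟨a, Or.inl (Or.inl rfl)⟩ ⟨b, Or.inl (Or.inr rfl)⟩,
      p.IsPath ∧ (⟨x, Or.inr hx⟩ : ({a, b} ∪ K : Set V)) ∈ p.support := by
  set S : Set V := {a, b} ∪ K with hSdef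
  set H : SimpleGraph S := (G.deleteEdges {s(a, b)}).induce ({a, b} ∪ K) with hHdef
  have memT_gen : ∀ (P : H.Walk ⟨a, Or.inl (Or.inl rfl)⟩ ⟨b, Or.inl (Or.inr rfl)⟩),
      ∀ v : S, v ∈ P.support → v.1 ∈ {t | ∃ h : t ∈ S, (⟨t, h⟩ : S) ∈ P.support} :=
    fun P v hv => ⟨v.2, hv⟩
  intro n
  induction n with
  | zero =>
    intro x hx R hR hRb hlen
    cases R with
    | nil => exact absurd hx hKa
    | cons hadj R' => simp at hlen
  | succ n ih =>
    intro x hx R hR hRb hlen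
    cases R with
    | nil => exact absurd hx hKa
    | @cons _ w' _ hadj R' =>
      have hxa : x ≠ a := fun hc => hKa (hc ▸ hx)
      have hxb : x ≠ b := fun hc => hKb (hc ▸ hx)
      by_cases hwa : w' = (⟨a, Or.inl (Or.inl rfl)⟩ : S)
      · -- base case: x is adjacent to a
        subst hwa
        obtain ⟨p0, hp0⟩ := avoid_walk G h2 a x b hxa (Ne.symm hab)
        obtain ⟨z, hzT, q, hq1, hq2⟩ := trunc hKa hKb hKmax ({a, b} : Set V)
          Set.subset_union_left (by simp) (by simp) a p0 hx
          (by simp [hxa, hxb]) (by simp) hp0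
        have hzb : z = (⟨b, Or.inl (Or.inr rfl)⟩ : S) := by
          apply Subtype.ext
          have hza : z.1 ≠ a := hq2 z q.end_mem_support
          rcases hzT with hz | hz
          · exact absurd hz hza
          · exact hz
        subst hzb
        refine ⟨Walk.cons hadj.symm q.bypass, ?_, ?_⟩
        · refine (q.bypass_isPath).cons ?_
          intro hc
          exact hq2 _ (q.support_bypass_subset hc) rfl
        · rw [Walk.support_cons]
          exact List.mem_cons_of_mem _ q.bypass.start_mem_support
      · -- inductive step
        have hwmem : w' ∈ (Walk.cons hadj R').support := by
          rw [Walk.support_cons]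
          exact List.mem_cons_of_mem _ R'.start_mem_support
        have hwb : w'.1 ≠ b := hRb w' hwmem
        have hwa' : w'.1 ≠ a := fun hc => hwa (Subtype.ext hc)
        have hwK : w'.1 ∈ K := by
          rcases w'.2 with (h | h) | h
          · exact absurd h hwa'
          · exact absurd h hwb
          · exact h
        have hR' : R'.IsPath := hR.of_cons
        have hRb' : ∀ v ∈ R'.support, v.1 ≠ b := fun v hv =>
          hRb v (by rw [Walk.support_cons]; exact List.mem_cons_of_mem _ hv)
        have hlen' : R'.length ≤ n := by
          rw [Walk.length_cons] at hlen; omega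
        obtain ⟨P, hP, hwP⟩ := ih w'.1 hwK R' hR' hRb' hlen'
        have hwP' : w' ∈ P.support := hwP
        by_cases hxP : (⟨x, Or.inr hx⟩ : S) ∈ P.support
        · exact ⟨P, hP, hxP⟩
        set T : Set V := {t | ∃ h : t ∈ S, (⟨t, h⟩ : S) ∈ P.support} with hTdef
        have memT : ∀ v : S, v ∈ P.support → v.1 ∈ T := memT_gen P
        have haT : a ∈ T := memT _ P.start_mem_support
        have hbT : b ∈ T := memT _ P.end_mem_support
        have hTsub : T ⊆ S := fun t ht => ht.choose
        have hxT : x ∉ T := fun hc => hxP hc.choose_spec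
        have hxw : x ≠ w'.1 := by
          intro hc
          have hxR' : (⟨x, Or.inr hx⟩ : S) ∉ R'.support :=
            ((Walk.cons_isPath_iff _ _).mp hR).2
          have hxx : (⟨x, Or.inr hx⟩ : S) = w' := Subtype.ext hc
          exact hxR' (hxx ▸ R'.start_mem_support)
        have hbw : b ≠ w'.1 := fun hc => hKb (hc ▸ hwK)
        obtain ⟨p0, hp0⟩ := avoid_walk G h2 w'.1 x b hxw hbw
        obtain ⟨z, hzT, q, hq1, hq2⟩ :=
          trunc hKa hKb hKmax T hTsub haT hbT w'.1 p0 hx hxT hbT hp0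
        have hzP : z ∈ P.support := hzT.choose_spec
        have hzw : z ≠ w' := fun hc => hq2 z q.end_mem_support (congrArg Subtype.val hc)
        have hqp := q.bypass_isPath
        have hqsub := q.support_bypass_subset
        have hqT : ∀ v ∈ q.bypass.support, v.1 ∈ T → v = z := by
          intro v hv hvT
          rcases hq1 v (hqsub hv) with h | h
          · exact Subtype.ext h
          · exact absurd hvT h.2
        have hqw : ∀ v ∈ q.bypass.support, v.1 ≠ w'.1 := fun v hv => hq2 v (hqsub hv)
        have hP1 : (P.takeUntil z hzP).IsPath := hP.takeUntil hzP
        have hP2 : (P.dropUntil z hzP).IsPath := hP.dropUntil hzP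
        have hw12 : w' ∈ (P.takeUntil z hzP).support ∨ w' ∈ (P.dropUntil z hzP).support := by
          rw [← Walk.mem_support_append_iff, P.take_spec hzP]
          exact hwP'
        rcases hw12 with hw1 | hw2
        · -- w' comes before z on P
          have hA : ((P.takeUntil z hzP).takeUntil w' hw1).IsPath := hP1.takeUntil hw1
          have hzA : z ∉ ((P.takeUntil z hzP).takeUntil w' hw1).support := by
            intro hc
            exact hzw (mem_both_split hP1 hw1 hc
              ((P.takeUntil z hzP).dropUntil w' hw1).end_mem_support)
          have hinner : (q.bypass.append (P.dropUntil z hzP)).IsPath := by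
            refine isPath_append' hqp hP2 ?_
            intro v hv1 hv2
            exact hqT v hv1 (memT v (P.support_dropUntil_subset hzP hv2))
          have hwmid : w' ∉ (q.bypass.append (P.dropUntil z hzP)).support := by
            intro hc
            rw [Walk.mem_support_append_iff] at hc
            rcases hc with hc | hc
            · exact hqw w' hc rfl
            · exact hzw (mem_both_split hP hzP hw1 hc).symm
          have hmid : (Walk.cons hadj.symm (q.bypass.append (P.dropUntil z hzP))).IsPath :=
            hinner.cons hwmid
          refine ⟨((P.takeUntil z hzP).takeUntil w' hw1).append
            (Walk.cons hadj.symm (q.bypass.append (P.dropUntil z hzP))), ?_, ?_⟩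
          · refine isPath_append' hA hmid ?_
            intro v hvA hvm
            rw [Walk.support_cons, List.mem_cons] at hvm
            rcases hvm with rfl | hvm
            · rfl
            · exfalso
              have hvP1 : v ∈ (P.takeUntil z hzP).support :=
                (P.takeUntil z hzP).support_takeUntil_subset hw1 hvA
              rw [Walk.mem_support_append_iff] at hvm
              rcases hvm with hvm | hvm
              · have hvz : v = z :=
                  hqT v hvm (memT v (P.support_takeUntil_subset hzP hvP1))
                exact hzA (hvz ▸ hvA)
              · have hvz : v = z := mem_both_split hP hzP hvP1 hvm
                exact hzA (hvz ▸ hvA)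
          · rw [Walk.mem_support_append_iff]
            right
            rw [Walk.support_cons]
            refine List.mem_cons_of_mem _ ?_
            rw [Walk.mem_support_append_iff]
            exact Or.inl q.bypass.start_mem_support
        · -- w' comes after z on P
          have hB : ((P.dropUntil z hzP).dropUntil w' hw2).IsPath := hP2.dropUntil hw2
          have hzB : z ∉ ((P.dropUntil z hzP).dropUntil w' hw2).support := by
            intro hc
            exact hzw (mem_both_split hP2 hw2
              ((P.dropUntil z hzP).takeUntil w' hw2).start_mem_support hc)
          have hxB : (⟨x, Or.inr hx⟩ : S) ∉ ((P.dropUntil z hzP).dropUntil w' hw2).support := by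
            intro hc
            exact hxP (P.support_dropUntil_subset hzP
              ((P.dropUntil z hzP).support_dropUntil_subset hw2 hc))
          have htailw : (Walk.cons hadj ((P.dropUntil z hzP).dropUntil w' hw2)).IsPath :=
            hB.cons hxB
          have hmidB : (q.bypass.reverse.append
              (Walk.cons hadj ((P.dropUntil z hzP).dropUntil w' hw2))).IsPath := by
            refine isPath_append' hqp.reverse htailw ?_
            intro v hv1 hv2
            rw [Walk.support_reverse, List.mem_reverse] at hv1
            rw [Walk.support_cons, List.mem_cons] at hv2
            rcases hv2 with rfl | hv2
            · rfl
            · exfalso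
              have hvz : v = z := hqT v hv1 (memT v (P.support_dropUntil_subset hzP
                ((P.dropUntil z hzP).support_dropUntil_subset hw2 hv2)))
              exact hzB (hvz ▸ hv2)
          refine ⟨(P.takeUntil z hzP).append (q.bypass.reverse.append
            (Walk.cons hadj ((P.dropUntil z hzP).dropUntil w' hw2))), ?_, ?_⟩
          · refine isPath_append' hP1 hmidB ?_
            intro v hv1 hv2
            rw [Walk.mem_support_append_iff] at hv2
            rcases hv2 with hv2 | hv2
            · rw [Walk.support_reverse, List.mem_reverse] at hv2
              exact hqT v hv2 (memT v (P.support_takeUntil_subset hzP hv1))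
            · rw [Walk.support_cons, List.mem_cons] at hv2
              rcases hv2 with rfl | hv2
              · exact absurd (P.support_takeUntil_subset hzP hv1) hxP
              · exact mem_both_split hP hzP hv1
                  ((P.dropUntil z hzP).support_dropUntil_subset hw2 hv2)
          · rw [Walk.mem_support_append_iff]
            right
            rw [Walk.mem_support_append_iff]
            right
            exact (Walk.cons hadj _).start_mem_support

end MainAux

/-- In a 2-connected graph with separation pair `{a,b}`, let `K` be (the vertex set
of) a connected component of `G` minus `{a,b}` and let `H` be the corresponding
split subgraph: the subgraph induced on `K ∪ {a,b}` with the edge `(a,b)` removed.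
Then every vertex `x ∈ K` lies on some simple `a`-`b` path inside `H`. -/
theorem path_through_vertex_in_split_subgraph {V : Type*} [Fintype V]
    (G : SimpleGraph V) (h2 : IsKConnected G 2)
    (a b : V) (hab : a ≠ b)
    (hcut : ¬ (G.induce {x | x ≠ a ∧ x ≠ b}).Connected)
    (K : Set V) (hKa : a ∉ K) (hKb : b ∉ K) (hKne : K.Nonempty)
    (hKconn : ∀ x ∈ K, ∀ y ∈ K, ∃ p : G.Walk x y, ∀ z ∈ p.support, z ∈ K)
    (hKmax : ∀ x ∈ K, ∀ y, G.Adj x y → y ≠ a → y ≠ b → y ∈ K)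
    (x : V) (hx : x ∈ K) :
    ∃ p : ((G.deleteEdges {s(a, b)}).induce ({a, b} ∪ K)).Walk
        ⟨a, by simp⟩ ⟨b, by simp⟩,
      p.IsPath ∧ (⟨x, by exact Or.inr hx⟩ : ({a, b} ∪ K : Set V)) ∈ p.support := by
  classical
  have hxa : x ≠ a := fun hc => hKa (hc ▸ hx)
  have hxb : x ≠ b := fun hc => hKb (hc ▸ hx)
  obtain ⟨p0, hp0⟩ := avoid_walk G h2 b x a hxb hab
  obtain ⟨z, hzT, q, hq1, hq2⟩ := trunc hKa hKb hKmax ({a, b} : Set V)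
    Set.subset_union_left (by simp) (by simp) b p0 hx
    (by simp [hxa, hxb]) (by simp) hp0
  have hza : z = (⟨a, Or.inl (Or.inl rfl)⟩ : ({a, b} ∪ K : Set V)) := by
    apply Subtype.ext
    have hzb : z.1 ≠ b := hq2 z q.end_mem_support
    rcases hzT with hz | hz
    · exact hz
    · exact absurd hz hzb
  subst hza
  have hRb : ∀ v ∈ q.bypass.support, v.1 ≠ b := fun v hv =>
    hq2 v (q.support_bypass_subset hv)
  obtain ⟨p, hp, hmem⟩ := main_ind h2 a b hab K hKa hKb hKmax
    q.bypass.length x hx q.bypass q.bypass_isPath hRb le_rfl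
  exact ⟨p, hp, hmem⟩
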